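/- arXiv:1509.00068 — 4 statements merged into one kernel-verified Lean document; each statement's English description precedes it below -/
import Mathlib

section
/- For every β > 0 and all a₀, a₁ > 0, inf { ∫₀¹ a'(s)²/(β a(s)) ds : a : [0,1] → ℝ absolutely continuous with square-integrable derivative, a > 0 on [0,1], a(0) = a₀, a(1) = a₁ } = (4/β)·(√a₁ − √a₀)². -/
open MeasureTheory Set

set_option maxHeartbeats 1000000

private lemma cs_sq (f : ℝ → ℝ) (s t : ℝ) (hst : s ≤ t)
    (hf : IntegrableOn f (Ioc s t)) (hf2 : IntegrableOn (fun x => f x ^ 2) (Ioc s t)) :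
    (∫ x in Ioc s t, f x) ^ 2 ≤ (t - s) * ∫ x in Ioc s t, f x ^ 2 := by
  rcases eq_or_lt_of_le hst with rfl | h
  · simp
  have hτ0 : (0:ℝ) < t - s := sub_pos.2 h
  have hμ : volume (Ioc s t) = ENNReal.ofReal (t - s) := Real.volume_Ioc
  set A := ∫ x in Ioc s t, f x with hA
  set B := ∫ x in Ioc s t, f x ^ 2 with hB
  set c := A / (t - s) with hc
  have hint_f : Integrable f (volume.restrict (Ioc s t)) := hf
  have hint_f2 : Integrable (fun x => f x ^ 2) (volume.restrict (Ioc s t)) := hf2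
  have key : 0 ≤ ∫ x in Ioc s t, (f x - c) ^ 2 := integral_nonneg fun x => sq_nonneg _
  have expand : ∫ x in Ioc s t, (f x - c) ^ 2 = B - 2 * c * A + c ^ 2 * (t - s) := by
    have heq : (fun x => (f x - c) ^ 2)
        = fun x => (f x ^ 2 - (2 * c) * f x) + c ^ 2 := by
      funext x; ring
    have hsub : Integrable (fun x => f x ^ 2 - 2 * c * f x) (volume.restrict (Ioc s t)) :=
      hint_f2.sub (hint_f.const_mul (2 * c))
    rw [heq, integral_add hsub (integrable_const _),
      integral_sub hint_f2 (hint_f.const_mul (2 * c)), MeasureTheory.integral_const_mul,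
      setIntegral_const, measureReal_def, hμ, ENNReal.toReal_ofReal hτ0.le]
    rw [smul_eq_mul]
    ring
  rw [expand] at key
  have hc2 : c * (t - s) = A := by
    rw [hc]; field_simp
  nlinarith [key, sq_nonneg (A - c * (t-s))]


private lemma lower_bound (β a₀ : ℝ) (hβ : 0 < β) (ha₀ : 0 < a₀)
    (a ad : ℝ → ℝ)
    (h1 : ∀ s ∈ Icc (0:ℝ) 1, a s = a₀ + ∫ t in (0:ℝ)..s, ad t)
    (h2 : MemLp ad 2 (volume.restrict (Icc (0:ℝ) 1)))
    (h3 : ∀ s ∈ Icc (0:ℝ) 1, 0 < a s) :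
    (4 / β) * (Real.sqrt (a 1) - Real.sqrt (a 0)) ^ 2
      ≤ ∫ s in (0:ℝ)..1, (ad s) ^ 2 / (β * a s) := by
  have hIcc01 : (0:ℝ) ∈ Icc (0:ℝ) 1 := ⟨le_refl 0, zero_le_one⟩
  haveI hfin : IsFiniteMeasure (volume.restrict (Icc (0:ℝ) 1)) :=
    ⟨by rw [Measure.restrict_apply_univ]; simp [Real.volume_Icc]⟩
  have hadL1 : IntegrableOn ad (Icc (0:ℝ) 1) := h2.integrable (by norm_num)
  have had2 : IntegrableOn (fun s => ad s ^ 2) (Icc (0:ℝ) 1) := h2.integrable_sq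
  -- continuity of `a` on `[0,1]`
  have hconta : ContinuousOn a (Icc (0:ℝ) 1) := by
    have hprim : ContinuousOn (fun x => a₀ + ∫ t in (0:ℝ)..x, ad t) (Icc (0:ℝ) 1) := by
      apply continuousOn_const.add
      have huI : uIcc (0:ℝ) 1 = Icc (0:ℝ) 1 := uIcc_of_le zero_le_one
      have := intervalIntegral.continuousOn_primitive_interval
        (μ := volume) (a := (0:ℝ)) (b := 1) (f := ad) (by rw [huI]; exact hadL1)
      rwa [huI] at this
    exact hprim.congr h1
  -- global positive minimum of `a`
  obtain ⟨c₀, hc₀, hminOn⟩ := isCompact_Icc.exists_isMinOn ⟨0, hIcc01⟩ hconta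
  set m := a c₀ with hm_def
  have hm : 0 < m := h3 _ hc₀
  have hmle : ∀ u ∈ Icc (0:ℝ) 1, m ≤ a u := fun u hu => hminOn hu
  -- integrability of the quotient
  have hm1 := had2.aestronglyMeasurable
  have hm2 := hconta.aestronglyMeasurable (μ := volume) measurableSet_Icc
  have hKint : IntegrableOn (fun s => ad s ^ 2 / a s) (Icc (0:ℝ) 1) := by
    have hmeas : AEStronglyMeasurable (fun s => ad s ^ 2 / a s)
        (volume.restrict (Icc (0:ℝ) 1)) := by
      have heq : (fun s => ad s ^ 2 / a s) = fun s => ad s ^ 2 * (a s)⁻¹ :=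
        funext fun s => div_eq_mul_inv _ _
      rw [heq]
      exact hm1.mul hm2.aemeasurable.inv.aestronglyMeasurable
    refine (had2.div_const m).mono hmeas ?_
    filter_upwards [ae_restrict_mem measurableSet_Icc] with u hu
    have hau : 0 < a u := h3 u hu
    rw [Real.norm_eq_abs, Real.norm_eq_abs, abs_of_nonneg (by positivity),
      abs_of_nonneg (by positivity)]
    exact div_le_div_of_nonneg_left (sq_nonneg _) hm (hmle u hu)
  set K := ∫ s in (0:ℝ)..1, ad s ^ 2 / a s with hK_def
  have hK0 : 0 ≤ K :=
    intervalIntegral.integral_nonneg zero_le_one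
      (fun u hu => div_nonneg (sq_nonneg _) (h3 u hu).le)
  -- generic interval integrability on subintervals of [0,1]
  have hiig : ∀ (g : ℝ → ℝ), IntegrableOn g (Icc (0:ℝ) 1) →
      ∀ u v : ℝ, 0 ≤ u → u ≤ v → v ≤ 1 → IntervalIntegrable g volume u v := by
    intro g hg u v hu huv hv
    rw [intervalIntegrable_iff_integrableOn_Ioc_of_le huv]
    exact hg.mono_set ((Ioc_subset_Icc_self).trans (Icc_subset_Icc hu hv))
  -- uniform continuity
  have huc := (isCompact_Icc.uniformContinuousOn_of_continuous hconta)
  rw [Metric.uniformContinuousOn_iff] at huc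
  set φ : ℝ → ℝ := fun u => Real.sqrt (a u) with hφ_def
  -- main estimate
  have key : ∀ ε : ℝ, 0 < ε → (φ 1 - φ 0) ^ 2 ≤ (1 + 2 * ε) / 4 * K := by
    intro ε hε
    obtain ⟨δ, hδ, hucδ⟩ := huc (ε * m) (by positivity)
    obtain ⟨n0, hn0⟩ := exists_nat_one_div_lt hδ
    set N : ℕ := n0 + 1 with hN_def
    have hN : (0:ℝ) < N := by positivity
    have hNd : 1 / (N:ℝ) < δ := by
      have hcast : ((N:ℝ)) = (n0:ℝ) + 1 := by rw [hN_def]; push_cast; ring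
      rw [hcast]; exact hn0
    set p : ℕ → ℝ := fun k => (k:ℝ) / N with hp_def
    have hp0 : p 0 = 0 := by simp [hp_def]
    have hpN : p N = 1 := by simp only [hp_def]; field_simp
    have hpmem : ∀ k : ℕ, k ≤ N → p k ∈ Icc (0:ℝ) 1 := by
      intro k hk
      constructor
      · positivity
      · rw [div_le_one hN]; exact_mod_cast hk
    have hplt : ∀ k : ℕ, p k < p (k + 1) := by
      intro k
      apply (div_lt_div_iff_of_pos_right hN).2
      exact_mod_cast Nat.lt_succ_self k
    have hpdiff : ∀ k : ℕ, p (k + 1) - p k = 1 / N := by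
      intro k
      rw [hp_def]
      push_cast
      field_simp
      ring
    -- the per-interval estimate
    have hper : ∀ k : ℕ, k < N →
        (φ (p (k + 1)) - φ (p k)) ^ 2
          ≤ (1 + 2 * ε) / (4 * N) * ∫ u in Ioc (p k) (p (k + 1)), ad u ^ 2 / a u := by
      intro k hkN
      set s := p k with hs_def
      set t := p (k + 1) with ht_def
      have hst : s < t := hplt k
      have hts : t - s = 1 / N := hpdiff k
      have hsI : s ∈ Icc (0:ℝ) 1 := hpmem k hkN.le
      have htI : t ∈ Icc (0:ℝ) 1 := hpmem (k + 1) hkN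
      have hsubI : Icc s t ⊆ Icc (0:ℝ) 1 := Icc_subset_Icc hsI.1 htI.2
      have has : 0 < a s := h3 _ hsI
      have hat : 0 < a t := h3 _ htI
      set mk := min (a s) (a t) with hmk_def
      have hmk : 0 < mk := lt_min has hat
      have hintsub : ∀ (g : ℝ → ℝ), IntegrableOn g (Icc (0:ℝ) 1) →
          IntegrableOn g (Ioc s t) := fun g hg =>
        hg.mono_set ((Ioc_subset_Icc_self).trans hsubI)
      -- increment of `a`
      have hΔa : a t - a s = ∫ u in Ioc s t, ad u := by
        rw [h1 t htI, h1 s hsI]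
        have h0t : IntervalIntegrable ad volume 0 t := hiig ad hadL1 0 t le_rfl htI.1 htI.2
        have h0s : IntervalIntegrable ad volume 0 s := hiig ad hadL1 0 s le_rfl hsI.1 hsI.2
        have hsub := intervalIntegral.integral_interval_sub_left h0t h0s
        have : a₀ + (∫ u in (0:ℝ)..t, ad u) - (a₀ + ∫ u in (0:ℝ)..s, ad u)
            = ∫ u in s..t, ad u := by rw [← hsub]; ring
        rw [this, intervalIntegral.integral_of_le hst.le]
      -- Cauchy–Schwarz
      have hCS : (a t - a s) ^ 2 ≤ (1 / N) * ∫ u in Ioc s t, ad u ^ 2 := by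
        rw [hΔa, ← hts]
        exact cs_sq ad s t hst.le (hintsub ad hadL1) (hintsub _ had2)
      -- pointwise comparison on the subinterval
      have hptle : ∀ u ∈ Ioc s t, a u ≤ (1 + 2 * ε) * mk := by
        intro u hu
        have huI : u ∈ Icc (0:ℝ) 1 := hsubI (Ioc_subset_Icc_self hu)
        have hdus : dist u s < δ := by
          rw [Real.dist_eq, abs_of_pos (sub_pos.2 hu.1)]
          calc u - s ≤ t - s := by linarith [hu.2]
          _ = 1 / N := hts
          _ < δ := hNd
        have hdts : dist t s < δ := by
          rw [Real.dist_eq, abs_of_pos (sub_pos.2 hst), hts]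
          exact hNd
        have h1' : |a u - a s| < ε * m := by
          have := hucδ u huI s hsI hdus
          rwa [Real.dist_eq] at this
        have h2' : |a t - a s| < ε * m := by
          have := hucδ t htI s hsI hdts
          rwa [Real.dist_eq] at this
        have hms : m ≤ a s := hmle s hsI
        have hmt : m ≤ a t := hmle t htI
        have hmmk : m ≤ mk := le_min hms hmt
        have hb1 : a u ≤ a s + ε * m := by
          have := abs_lt.1 h1'
          linarith [this.1, this.2]
        have hb2 : a s ≤ mk + ε * m := by
          rcases le_total (a s) (a t) with h | h
          · have : mk = a s := min_eq_left h
            rw [this]; nlinarith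
          · have : mk = a t := min_eq_right h
            rw [this]
            have := abs_lt.1 h2'
            linarith [this.2]
        nlinarith
      -- integral comparison
      have hJ0 : 0 ≤ ∫ u in Ioc s t, ad u ^ 2 / a u :=
        setIntegral_nonneg measurableSet_Ioc fun u hu =>
          div_nonneg (sq_nonneg _) (h3 u (hsubI (Ioc_subset_Icc_self hu))).le
      have hmono : (∫ u in Ioc s t, ad u ^ 2)
          ≤ (1 + 2 * ε) * mk * ∫ u in Ioc s t, ad u ^ 2 / a u := by
        have hint1 : IntegrableOn (fun u => ad u ^ 2) (Ioc s t) := hintsub _ had2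
        have hint2 : IntegrableOn (fun u => (1 + 2 * ε) * mk * (ad u ^ 2 / a u)) (Ioc s t) :=
          (hintsub _ hKint).const_mul _
        have := setIntegral_mono_on hint1 hint2 measurableSet_Ioc ?_
        · rwa [MeasureTheory.integral_const_mul] at this
        · intro u hu
          have hau : 0 < a u := h3 u (hsubI (Ioc_subset_Icc_self hu))
          have h2u : (1 + 2 * ε) * mk * (ad u ^ 2 / a u)
              = ((1 + 2 * ε) * mk * ad u ^ 2) / a u := by ring
          rw [h2u, le_div_iff₀ hau]
          nlinarith [hptle u hu, sq_nonneg (ad u)]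
      -- the square-root increment
      have hsqt : Real.sqrt (a t) ^ 2 = a t := Real.sq_sqrt hat.le
      have hsqs : Real.sqrt (a s) ^ 2 = a s := Real.sq_sqrt has.le
      have hφeq : (φ t - φ s) * (φ t + φ s) = a t - a s := by
        simp only [hφ_def]
        nlinarith [hsqt, hsqs]
      have hqmk : 4 * mk ≤ (φ t + φ s) ^ 2 := by
        have h1q : Real.sqrt mk ≤ φ s := by
          simp only [hφ_def]; exact Real.sqrt_le_sqrt (min_le_left _ _)
        have h2q : Real.sqrt mk ≤ φ t := by
          simp only [hφ_def]; exact Real.sqrt_le_sqrt (min_le_right _ _)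
        nlinarith [Real.sq_sqrt hmk.le, Real.sqrt_nonneg mk]
      have hΔφ : (φ t - φ s) ^ 2 * (4 * mk) ≤ (a t - a s) ^ 2 := by
        calc (φ t - φ s) ^ 2 * (4 * mk) ≤ (φ t - φ s) ^ 2 * (φ t + φ s) ^ 2 :=
              mul_le_mul_of_nonneg_left hqmk (sq_nonneg _)
        _ = ((φ t - φ s) * (φ t + φ s)) ^ 2 := by ring
        _ = (a t - a s) ^ 2 := by rw [hφeq]
      -- combine
      have hchain : (φ t - φ s) ^ 2 * (4 * mk)
          ≤ (1 / N) * ((1 + 2 * ε) * mk * ∫ u in Ioc s t, ad u ^ 2 / a u) := by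
        calc (φ t - φ s) ^ 2 * (4 * mk) ≤ (a t - a s) ^ 2 := hΔφ
        _ ≤ (1 / N) * ∫ u in Ioc s t, ad u ^ 2 := hCS
        _ ≤ (1 / N) * ((1 + 2 * ε) * mk * ∫ u in Ioc s t, ad u ^ 2 / a u) := by
              apply mul_le_mul_of_nonneg_left hmono (by positivity)
      have h4X : 4 * (φ t - φ s) ^ 2
          ≤ (1 / N) * ((1 + 2 * ε) * ∫ u in Ioc s t, ad u ^ 2 / a u) := by
        refine (mul_le_mul_iff_of_pos_right hmk).1 ?_
        nlinarith [hchain]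
      have hNN : (1 / (N:ℝ)) * ((1 + 2 * ε) * ∫ u in Ioc s t, ad u ^ 2 / a u) * N
          = (1 + 2 * ε) * ∫ u in Ioc s t, ad u ^ 2 / a u := by
        field_simp
      rw [div_mul_eq_mul_div, le_div_iff₀ (by positivity)]
      calc (φ t - φ s) ^ 2 * (4 * N) = (4 * (φ t - φ s) ^ 2) * N := by ring
      _ ≤ (1 / N) * ((1 + 2 * ε) * ∫ u in Ioc s t, ad u ^ 2 / a u) * N :=
            mul_le_mul_of_nonneg_right h4X hN.le
      _ = (1 + 2 * ε) * ∫ u in Ioc s t, ad u ^ 2 / a u := hNN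
    -- telescoping and summation
    have htele : φ 1 - φ 0 = ∑ k ∈ Finset.range N, (φ (p (k + 1)) - φ (p k)) := by
      rw [Finset.sum_range_sub (fun k => φ (p k)), hp0, hpN]
    set J : ℕ → ℝ := fun k => ∫ u in Ioc (p k) (p (k + 1)), ad u ^ 2 / a u with hJ_def
    have hJ0 : ∀ k : ℕ, k < N → 0 ≤ J k := by
      intro k hk
      exact setIntegral_nonneg measurableSet_Ioc fun u hu =>
        div_nonneg (sq_nonneg _)
          (h3 u (Icc_subset_Icc (hpmem k hk.le).1 (hpmem (k+1) hk).2
            (Ioc_subset_Icc_self hu))).le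
    have hJsum : ∑ k ∈ Finset.range N, J k = K := by
      have hii : ∀ k < N, IntervalIntegrable (fun u => ad u ^ 2 / a u) volume (p k) (p (k+1)) :=
        fun k hk => hiig _ hKint (p k) (p (k+1)) (hpmem k hk.le).1 (hplt k).le (hpmem (k+1) hk).2
      have := intervalIntegral.sum_integral_adjacent_intervals (μ := volume)
        (f := fun u => ad u ^ 2 / a u) (a := p) (n := N) hii
      rw [hp0, hpN] at this
      rw [hK_def, ← this]
      apply Finset.sum_congr rfl
      intro k hk
      rw [hJ_def, intervalIntegral.integral_of_le (hplt k).le]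
    have habs : |φ 1 - φ 0| ≤ ∑ k ∈ Finset.range N,
        Real.sqrt ((1 + 2 * ε) / (4 * N) * J k) := by
      rw [htele]
      refine (Finset.abs_sum_le_sum_abs _ _).trans (Finset.sum_le_sum fun k hkm => ?_)
      have hk := hper k (Finset.mem_range.mp hkm)
      have : |φ (p (k + 1)) - φ (p k)| = Real.sqrt ((φ (p (k + 1)) - φ (p k)) ^ 2) :=
        (Real.sqrt_sq_eq_abs _).symm
      rw [this]
      exact Real.sqrt_le_sqrt hk
    have hsum_sq : (∑ k ∈ Finset.range N, Real.sqrt ((1 + 2 * ε) / (4 * N) * J k)) ^ 2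
        ≤ (N:ℝ) * ∑ k ∈ Finset.range N, ((1 + 2 * ε) / (4 * N) * J k) := by
      have := sq_sum_le_card_mul_sum_sq (s := Finset.range N)
        (f := fun k => Real.sqrt ((1 + 2 * ε) / (4 * N) * J k))
      rw [Finset.card_range] at this
      refine this.trans ?_
      apply mul_le_mul_of_nonneg_left _ (Nat.cast_nonneg N)
      apply Finset.sum_le_sum
      intro k hk
      rw [Real.sq_sqrt (mul_nonneg (by positivity) (hJ0 k (Finset.mem_range.mp hk)))]
    -- conclude the key estimate
    have hNne : (N:ℝ) ≠ 0 := ne_of_gt hN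
    calc (φ 1 - φ 0) ^ 2 = |φ 1 - φ 0| ^ 2 := (sq_abs _).symm
    _ ≤ (∑ k ∈ Finset.range N, Real.sqrt ((1 + 2 * ε) / (4 * N) * J k)) ^ 2 :=
          pow_le_pow_left₀ (abs_nonneg _) habs 2
    _ ≤ (N:ℝ) * ∑ k ∈ Finset.range N, ((1 + 2 * ε) / (4 * N) * J k) := hsum_sq
    _ = (1 + 2 * ε) / 4 * K := by
          rw [← Finset.mul_sum, hJsum]
          field_simp
  -- put it together
  have hφ1 : φ 1 = Real.sqrt (a 1) := rfl
  have hφ0 : φ 0 = Real.sqrt (a 0) := rfl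
  have hforall : ∀ c : ℝ, 0 < c → 4 * (φ 1 - φ 0) ^ 2 ≤ K + c := by
    intro c hc
    have hK1 : (0:ℝ) < K + 1 := by linarith
    have hεp : 0 < c / (2 * (K + 1)) := by positivity
    have hkey := key _ hεp
    have h1c : 2 * (c / (2 * (K + 1))) * K ≤ c := by
      have hre : 2 * (c / (2 * (K + 1))) * K = c * K / (K + 1) := by
        field_simp
      rw [hre, div_le_iff₀ hK1]
      nlinarith
    nlinarith [hkey]
  have hmain : 4 * (φ 1 - φ 0) ^ 2 ≤ K := by
    by_contra hcon
    push_neg at hcon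
    have := hforall ((4 * (φ 1 - φ 0) ^ 2 - K) / 2) (by linarith)
    linarith
  have hint_eq : (∫ s in (0:ℝ)..1, ad s ^ 2 / (β * a s)) = K / β := by
    have heq : (fun s => ad s ^ 2 / (β * a s)) = fun s => (ad s ^ 2 / a s) / β := by
      funext s
      rw [mul_comm β (a s), div_mul_eq_div_div]
    rw [heq, intervalIntegral.integral_div]
  rw [hint_eq, div_mul_eq_mul_div]
  rw [div_le_div_iff₀ hβ hβ]
  rw [hφ1, hφ0] at hmain
  nlinarith [hmain, hβ.le]

/-- For every `β > 0` and all `a₀, a₁ > 0`,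
`inf { ∫₀¹ a'(s)²/(β a(s)) ds }`, over all absolutely continuous `a : [0,1] → ℝ` with
square-integrable derivative, `a > 0` on `[0,1]`, `a(0) = a₀`, `a(1) = a₁`, equals
`(4/β)·(√a₁ − √a₀)²`. This is the pure reaction (Hellinger) case of the
one-mass-point cost. -/
theorem hellinger_oneMassPoint_cost (β a₀ a₁ : ℝ) (hβ : 0 < β)
    (ha₀ : 0 < a₀) (ha₁ : 0 < a₁) :
    sInf { I : ℝ | ∃ a ad : ℝ → ℝ,
        (∀ s ∈ Icc (0:ℝ) 1, a s = a₀ + ∫ t in (0:ℝ)..s, ad t) ∧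
        MemLp ad 2 (volume.restrict (Icc (0:ℝ) 1)) ∧
        (∀ s ∈ Icc (0:ℝ) 1, 0 < a s) ∧ a 0 = a₀ ∧ a 1 = a₁ ∧
        I = ∫ s in (0:ℝ)..1, (ad s)^2 / (β * a s) }
      = (4 / β) * (Real.sqrt a₁ - Real.sqrt a₀)^2 := by
  haveI hfin : IsFiniteMeasure (volume.restrict (Icc (0:ℝ) 1)) :=
    ⟨by rw [Measure.restrict_apply_univ]; simp [Real.volume_Icc]⟩
  set d := Real.sqrt a₁ - Real.sqrt a₀ with hd_def
  have hs0 : 0 < Real.sqrt a₀ := Real.sqrt_pos.2 ha₀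
  have hs1 : 0 < Real.sqrt a₁ := Real.sqrt_pos.2 ha₁
  have hr : ∀ s ∈ Icc (0:ℝ) 1, 0 < Real.sqrt a₀ + s * d := by
    intro s hs
    rcases eq_or_lt_of_le hs.1 with h | h
    · rw [← h]; simpa using hs0
    · have h2 := hs.2
      rw [hd_def]
      nlinarith [mul_pos h hs1, mul_nonneg (sub_nonneg.2 h2) hs0.le]
  -- the optimal witness
  have hmem : (4 / β) * d ^ 2 ∈ { I : ℝ | ∃ a ad : ℝ → ℝ,
        (∀ s ∈ Icc (0:ℝ) 1, a s = a₀ + ∫ t in (0:ℝ)..s, ad t) ∧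
        MemLp ad 2 (volume.restrict (Icc (0:ℝ) 1)) ∧
        (∀ s ∈ Icc (0:ℝ) 1, 0 < a s) ∧ a 0 = a₀ ∧ a 1 = a₁ ∧
        I = ∫ s in (0:ℝ)..1, (ad s)^2 / (β * a s) } := by
    refine ⟨fun s => (Real.sqrt a₀ + s * d) ^ 2,
      fun s => 2 * d * (Real.sqrt a₀ + s * d), ?_, ?_, ?_, ?_, ?_, ?_⟩
    · intro s _
      have hint : (∫ t in (0:ℝ)..s, 2 * d * (Real.sqrt a₀ + t * d))
          = 2 * d * Real.sqrt a₀ * s + d ^ 2 * s ^ 2 := by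
        have heq : (fun t => 2 * d * (Real.sqrt a₀ + t * d))
            = fun t => (2 * d * Real.sqrt a₀) + (2 * d ^ 2) * t := by
          funext t; ring
        have hcont : Continuous fun t : ℝ => (2 * d ^ 2) * t := by continuity
        rw [heq, intervalIntegral.integral_add intervalIntegrable_const
          (hcont.intervalIntegrable 0 s), intervalIntegral.integral_const]
        have h2' : (∫ t in (0:ℝ)..s, (2 * d ^ 2) * t) = 2 * d ^ 2 * (s ^ 2 / 2) := by
          rw [intervalIntegral.integral_const_mul, integral_id]
          ring
        rw [h2']
        simp
        ring
      rw [hint]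
      linear_combination Real.sq_sqrt ha₀.le
    · refine MemLp.of_bound ((Continuous.aestronglyMeasurable (by continuity)))
        (2 * |d| * (Real.sqrt a₀ + |d|)) ?_
      filter_upwards [ae_restrict_mem measurableSet_Icc] with s hs
      have habs : |s| ≤ 1 := abs_le.2 ⟨by linarith [hs.1], hs.2⟩
      have h1' : |Real.sqrt a₀ + s * d| ≤ Real.sqrt a₀ + |d| := by
        calc |Real.sqrt a₀ + s * d| ≤ |Real.sqrt a₀| + |s * d| := abs_add_le _ _
        _ = Real.sqrt a₀ + |s| * |d| := by
              rw [abs_of_nonneg (Real.sqrt_nonneg _), abs_mul]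
        _ ≤ Real.sqrt a₀ + |d| := by nlinarith [abs_nonneg d, abs_nonneg s]
      rw [Real.norm_eq_abs, abs_mul]
      calc |2 * d| * |Real.sqrt a₀ + s * d| ≤ |2 * d| * (Real.sqrt a₀ + |d|) :=
            mul_le_mul_of_nonneg_left h1' (abs_nonneg _)
      _ = 2 * |d| * (Real.sqrt a₀ + |d|) := by rw [abs_mul, abs_two]
    · intro s hs
      exact pow_pos (hr s hs) 2
    · simp [Real.sq_sqrt ha₀.le]
    · show (Real.sqrt a₀ + 1 * d) ^ 2 = a₁
      rw [show Real.sqrt a₀ + 1 * d = Real.sqrt a₁ by rw [hd_def]; ring,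
        Real.sq_sqrt ha₁.le]
    · have hval : (∫ s in (0:ℝ)..1,
          (2 * d * (Real.sqrt a₀ + s * d)) ^ 2 / (β * (Real.sqrt a₀ + s * d) ^ 2))
          = 4 * d ^ 2 / β := by
        rw [intervalIntegral.integral_congr (g := fun _ => 4 * d ^ 2 / β) ?_]
        · rw [intervalIntegral.integral_const]
          simp
        · intro s hs
          rw [uIcc_of_le zero_le_one] at hs
          have hrs : (Real.sqrt a₀ + s * d) ≠ 0 := (hr s hs).ne'
          have hrs2 : ((Real.sqrt a₀ + s * d) ^ 2) ≠ 0 := pow_ne_zero _ hrs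
          beta_reduce
          rw [div_eq_div_iff (mul_ne_zero hβ.ne' hrs2) hβ.ne']
          ring
      rw [hval]
      ring
  apply le_antisymm
  · refine csInf_le ⟨0, ?_⟩ hmem
    rintro I ⟨a, ad, h1, h2, h3, h4, h5, rfl⟩
    exact intervalIntegral.integral_nonneg zero_le_one fun u hu =>
      div_nonneg (sq_nonneg _) (mul_pos hβ (h3 u hu)).le
  · refine le_csInf ⟨_, hmem⟩ ?_
    rintro I ⟨a, ad, h1, h2, h3, h4, h5, rfl⟩
    have := lower_bound β a₀ hβ ha₀ a ad h1 h2 h3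
    rw [h4, h5] at this
    exact this
end

section
/- Let a₀, a₁, b₁ > 0 and 0 ≤ L < π/2. Then inf { F_B(e₀/a₀)·a₀ + F_B((e₀−e₁)/a₁)·a₁ + F_B(e₁/b₁)·b₁ − 2e₁·log(cos L) : e₀, e₁ ∈ ℝ with e₀ ≥ e₁ ≥ 0 } = a₀ + a₁ + b₁ − 2√(a₀(a₁ + b₁ cos²L)). -/
/-- The Boltzmann function `F_B(z) = z log z − z + 1` (equal to `1` at `z = 0`). -/
noncomputable def FB (z : ℝ) : ℝ := z * Real.log z - z + 1

lemma FB_tangent (t s : ℝ) (ht : 0 ≤ t) : t * s - Real.exp s + 1 ≤ FB t := by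
  rcases ht.eq_or_lt with h | h
  · simp [FB, ← h]
    positivity
  · have h1 : (s - Real.log t) + 1 ≤ Real.exp (s - Real.log t) := Real.add_one_le_exp _
    have h2 : Real.exp (s - Real.log t) = Real.exp s / t := by
      rw [Real.exp_sub, Real.exp_log h]
    rw [h2] at h1
    have h3 : t * ((s - Real.log t) + 1) ≤ Real.exp s := by
      have := mul_le_mul_of_nonneg_left h1 h.le
      calc t * ((s - Real.log t) + 1) ≤ t * (Real.exp s / t) := this
        _ = Real.exp s := by field_simp
    unfold FB
    nlinarith

lemma FB_scaled (e a s : ℝ) (he : 0 ≤ e) (ha : 0 < a) :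
    e * s - a * (Real.exp s - 1) ≤ FB (e / a) * a := by
  have h := FB_tangent (e / a) s (by positivity)
  have := mul_le_mul_of_nonneg_right h ha.le
  calc e * s - a * (Real.exp s - 1) = ((e / a) * s - Real.exp s + 1) * a := by
        field_simp; ring
    _ ≤ FB (e / a) * a := this

/-- For `a₀, a₁, b₁ > 0` and `0 ≤ L < π/2`,
`inf { F_B(e₀/a₀)a₀ + F_B((e₀−e₁)/a₁)a₁ + F_B(e₁/b₁)b₁ − 2e₁ log(cos L) : e₀ ≥ e₁ ≥ 0 }`
equals `a₀ + a₁ + b₁ − 2√(a₀(a₁ + b₁cos²L))`. -/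
theorem entropyTransport_massSplitting (a₀ a₁ b₁ L : ℝ)
    (ha₀ : 0 < a₀) (ha₁ : 0 < a₁) (hb₁ : 0 < b₁) (hL₀ : 0 ≤ L) (hL : L < Real.pi / 2) :
    sInf { v : ℝ | ∃ e₀ e₁ : ℝ, e₁ ≤ e₀ ∧ 0 ≤ e₁ ∧
        v = FB (e₀ / a₀) * a₀ + FB ((e₀ - e₁) / a₁) * a₁ + FB (e₁ / b₁) * b₁
              - 2 * e₁ * Real.log (Real.cos L) }
      = a₀ + a₁ + b₁ - 2 * Real.sqrt (a₀ * (a₁ + b₁ * Real.cos L ^ 2)) := by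
  set c := Real.cos L with hc_def
  have hc : 0 < c := Real.cos_pos_of_mem_Ioo ⟨by linarith [Real.pi_pos], hL⟩
  set m : ℝ := a₁ + b₁ * c ^ 2 with hm_def
  have hm : 0 < m := by positivity
  set E : ℝ := Real.sqrt (a₀ * m) with hE_def
  have hE : 0 < E := Real.sqrt_pos.mpr (by positivity)
  have hE2 : E ^ 2 = a₀ * m := Real.sq_sqrt (by positivity : (0:ℝ) ≤ a₀ * m)
  set r : ℝ := E / m with hr_def
  have hr : 0 < r := by positivity
  have hmr : m * r = E := by rw [hr_def]; field_simp
  have hmr' : (a₁ + b₁ * c ^ 2) * r = E := by rw [← hm_def]; exact hmr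
  have hEr : E * r = a₀ := by
    rw [hr_def, ← mul_div_assoc, div_eq_iff hm.ne']
    linear_combination hE2
  have har : a₀ * r⁻¹ = E := by
    field_simp
    linear_combination -hEr
  set lg := Real.log r with hlg_def
  set lc := Real.log c with hlc_def
  have hexp_lg : Real.exp lg = r := Real.exp_log hr
  have hexp_lc : Real.exp lc = c := Real.exp_log hc
  clear_value lg lc r E m c
  have hsum : a₀ * (r⁻¹ - 1) + a₁ * (r - 1) + b₁ * (r * c ^ 2 - 1)
      = 2 * E - (a₀ + a₁ + b₁) := by linear_combination har + hmr'
  -- lower bound for every element of the set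
  have hlb : ∀ v ∈ { v : ℝ | ∃ e₀ e₁ : ℝ, e₁ ≤ e₀ ∧ 0 ≤ e₁ ∧
        v = FB (e₀ / a₀) * a₀ + FB ((e₀ - e₁) / a₁) * a₁ + FB (e₁ / b₁) * b₁
              - 2 * e₁ * lc },
      a₀ + a₁ + b₁ - 2 * E ≤ v := by
    rintro v ⟨e₀, e₁, h10, h1, rfl⟩
    have h0 : (0:ℝ) ≤ e₀ := le_trans h1 h10
    have t0 := FB_scaled e₀ a₀ (-lg) h0 ha₀
    have t1 := FB_scaled (e₀ - e₁) a₁ lg (by linarith) ha₁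
    have t2 := FB_scaled e₁ b₁ (lg + 2 * lc) h1 hb₁
    have e0 : Real.exp (-lg) = r⁻¹ := by rw [Real.exp_neg, hexp_lg]
    have e2 : Real.exp (lg + 2 * lc) = r * c ^ 2 := by
      rw [two_mul, ← add_assoc, Real.exp_add, Real.exp_add, hexp_lg, hexp_lc]; ring
    rw [e0] at t0
    rw [hexp_lg] at t1
    rw [e2] at t2
    linarith [t0, t1, t2, hsum]
  -- the minimizer
  have hmem : a₀ + a₁ + b₁ - 2 * E ∈ { v : ℝ | ∃ e₀ e₁ : ℝ, e₁ ≤ e₀ ∧ 0 ≤ e₁ ∧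
        v = FB (e₀ / a₀) * a₀ + FB ((e₀ - e₁) / a₁) * a₁ + FB (e₁ / b₁) * b₁
              - 2 * e₁ * lc } := by
    refine ⟨E, b₁ * c ^ 2 * r, ?_, by positivity, ?_⟩
    · nlinarith [hmr', mul_pos ha₁ hr]
    · have q0 : E / a₀ = r⁻¹ := by
        field_simp
        linear_combination hEr
      have q1 : (E - b₁ * c ^ 2 * r) / a₁ = r := by
        rw [div_eq_iff ha₁.ne']
        linear_combination -hmr'
      have q2 : b₁ * c ^ 2 * r / b₁ = c ^ 2 * r := by field_simp
      rw [q0, q1, q2]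
      unfold FB
      have l0 : Real.log r⁻¹ = -lg := by rw [hlg_def]; exact Real.log_inv r
      have l2 : Real.log (c ^ 2 * r) = 2 * lc + lg := by
        rw [Real.log_mul (by positivity) hr.ne', Real.log_pow, hlc_def, hlg_def]; push_cast; ring
      rw [l0, l2, ← hlg_def]
      linear_combination (1 - lg) * hmr' + (lg + 1) * har
  exact le_antisymm (csInf_le ⟨a₀ + a₁ + b₁ - 2 * E, hlb⟩ hmem)
    (le_csInf ⟨_, hmem⟩ hlb)
end

section
/- For all z₀, z₁ ∈ Ω×[0,∞) and all 0 ≤ s ≤ t ≤ 1, the geodesic interpolator satisfies d_C( Z(s;z₀,z₁), Z(t;z₀,z₁) ) = (t − s)·d_C(z₀,z₁); in particular s ↦ Z(s;z₀,z₁) is a constant-speed geodesic in the cone connecting z₀ and z₁. -/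
open MeasureTheory Set
open scoped NNReal ENNReal

/-- The ambient Euclidean space `ℝ^d`. -/
noncomputable abbrev Euc (d : ℕ) := EuclideanSpace ℝ (Fin d)

/-- `cos_π(a) := cos (min |a| π)`. -/
noncomputable def cosPi (a : ℝ) : ℝ := Real.cos (min |a| Real.pi)

/-- The cone distance on `ℝ^d × [0,∞)`:
`d_C((x₀,r₀),(x₁,r₁)) = √(r₀² + r₁² − 2r₀r₁ cos_π(|x₁−x₀|))`.
All points with `r = 0` are identified with the tip of the cone. -/
noncomputable def coneDist {d : ℕ} (z₀ z₁ : Euc d × ℝ≥0) : ℝ :=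
  Real.sqrt ((z₀.2 : ℝ)^2 + (z₁.2 : ℝ)^2
    - 2 * (z₀.2 : ℝ) * (z₁.2 : ℝ) * cosPi (dist z₁.1 z₀.1))

/-- The radius component `R(s;z₀,z₁)` of the geodesic interpolator on the cone. -/
noncomputable def Rgeo {d : ℕ} (s : ℝ) (z₀ z₁ : Euc d × ℝ≥0) : ℝ :=
  Real.sqrt ((1 - s)^2 * (z₀.2 : ℝ)^2 + s^2 * (z₁.2 : ℝ)^2
    + 2 * s * (1 - s) * (z₀.2 : ℝ) * (z₁.2 : ℝ) * cosPi (dist z₁.1 z₀.1))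

/-- The interpolation parameter `ρ(s;z₀,z₁)` of the geodesic interpolator. -/
noncomputable def rhoGeo {d : ℕ} (s : ℝ) (z₀ z₁ : Euc d × ℝ≥0) : ℝ :=
  if 0 < dist z₁.1 z₀.1 ∧ dist z₁.1 z₀.1 < Real.pi ∧ 0 < Rgeo s z₀ z₁ then
    (dist z₁.1 z₀.1)⁻¹ *
      Real.arccos (((1 - s) * (z₀.2 : ℝ) + s * (z₁.2 : ℝ) * Real.cos (dist z₁.1 z₀.1))
        / Rgeo s z₀ z₁)
  else if Real.pi ≤ dist z₁.1 z₀.1 then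
    (1 + Real.sign ((1 - s) * (z₀.2 : ℝ) - s * (z₁.2 : ℝ))) / 2
  else 0

/-- The spatial component `X(s;z₀,z₁) = (1−ρ)x₀ + ρx₁` of the geodesic interpolator. -/
noncomputable def Xgeo {d : ℕ} (s : ℝ) (z₀ z₁ : Euc d × ℝ≥0) : Euc d :=
  (1 - rhoGeo s z₀ z₁) • z₀.1 + rhoGeo s z₀ z₁ • z₁.1

/-- The geodesic interpolator `Z(s;z₀,z₁) = (X(s;z₀,z₁), R(s;z₀,z₁))` on the cone. -/
noncomputable def Zgeo {d : ℕ} (s : ℝ) (z₀ z₁ : Euc d × ℝ≥0) : Euc d × ℝ≥0 :=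
  (Xgeo s z₀ z₁, Real.toNNReal (Rgeo s z₀ z₁))

namespace ConeAux

variable {d : ℕ}

/-- First coordinate of the planar embedding of the geodesic chord. -/
noncomputable def c1 (u : ℝ) (z₀ z₁ : Euc d × ℝ≥0) : ℝ :=
  (1 - u) * (z₀.2 : ℝ) + u * (z₁.2 : ℝ) * Real.cos (min (dist z₁.1 z₀.1) Real.pi)

/-- Second coordinate of the planar embedding of the geodesic chord. -/
noncomputable def c2 (u : ℝ) (z₀ z₁ : Euc d × ℝ≥0) : ℝ :=
  u * (z₁.2 : ℝ) * Real.sin (min (dist z₁.1 z₀.1) Real.pi)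

lemma cosPi_eq (a : ℝ) (ha : 0 ≤ a) : cosPi a = Real.cos (min a Real.pi) := by
  rw [cosPi, abs_of_nonneg ha]

lemma Rgeo_eq (u : ℝ) (z₀ z₁ : Euc d × ℝ≥0) :
    Rgeo u z₀ z₁ = Real.sqrt (c1 u z₀ z₁ ^ 2 + c2 u z₀ z₁ ^ 2) := by
  rw [Rgeo, cosPi_eq _ dist_nonneg]
  congr 1
  have h := Real.sin_sq_add_cos_sq (min (dist z₁.1 z₀.1) Real.pi)
  simp only [c1, c2]
  linear_combination (-(u ^ 2 * ((z₁.2 : ℝ)) ^ 2)) * h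

lemma Rgeo_nonneg (u : ℝ) (z₀ z₁ : Euc d × ℝ≥0) : 0 ≤ Rgeo u z₀ z₁ :=
  Real.sqrt_nonneg _

lemma Rgeo_sq (u : ℝ) (z₀ z₁ : Euc d × ℝ≥0) :
    Rgeo u z₀ z₁ ^ 2 = c1 u z₀ z₁ ^ 2 + c2 u z₀ z₁ ^ 2 := by
  rw [Rgeo_eq]
  exact Real.sq_sqrt (by positivity)

lemma dist_Xgeo (u v : ℝ) (z₀ z₁ : Euc d × ℝ≥0) :
    dist (Xgeo v z₀ z₁) (Xgeo u z₀ z₁)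
      = |rhoGeo v z₀ z₁ - rhoGeo u z₀ z₁| * dist z₁.1 z₀.1 := by
  rw [Xgeo, Xgeo, dist_eq_norm]
  have h : ((1 - rhoGeo v z₀ z₁) • z₀.1 + rhoGeo v z₀ z₁ • z₁.1)
      - ((1 - rhoGeo u z₀ z₁) • z₀.1 + rhoGeo u z₀ z₁ • z₁.1)
      = (rhoGeo v z₀ z₁ - rhoGeo u z₀ z₁) • (z₁.1 - z₀.1) := by
    module
  rw [h, norm_smul, Real.norm_eq_abs, ← dist_eq_norm]



lemma c1_c2_of_Rgeo_zero {u : ℝ} {z₀ z₁ : Euc d × ℝ≥0} (h : Rgeo u z₀ z₁ = 0) :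
    c1 u z₀ z₁ = 0 ∧ c2 u z₀ z₁ = 0 := by
  have h2 := Rgeo_sq u z₀ z₁
  rw [h] at h2
  constructor <;> nlinarith [sq_nonneg (c1 u z₀ z₁), sq_nonneg (c2 u z₀ z₁)]

lemma key (z₀ z₁ : Euc d × ℝ≥0) {s t : ℝ} (hs : 0 ≤ s) (hs1 : s ≤ 1)
    (ht : 0 ≤ t) (ht1 : t ≤ 1) :
    Rgeo s z₀ z₁ * Rgeo t z₀ z₁ * cosPi (dist (Xgeo t z₀ z₁) (Xgeo s z₀ z₁))
      = c1 s z₀ z₁ * c1 t z₀ z₁ + c2 s z₀ z₁ * c2 t z₀ z₁ := by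
  have hD0 : (0:ℝ) ≤ dist z₁.1 z₀.1 := dist_nonneg
  have hr₀ : (0:ℝ) ≤ (z₀.2 : ℝ) := z₀.2.coe_nonneg
  have hr₁ : (0:ℝ) ≤ (z₁.2 : ℝ) := z₁.2.coe_nonneg
  have hdist : dist (Xgeo t z₀ z₁) (Xgeo s z₀ z₁)
      = |rhoGeo t z₀ z₁ - rhoGeo s z₀ z₁| * dist z₁.1 z₀.1 := dist_Xgeo s t z₀ z₁
  rcases eq_or_lt_of_le hD0 with hD | hDpos
  · -- D = 0
    have hθ : min (dist z₁.1 z₀.1) Real.pi = 0 := by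
      rw [← hD]; exact min_eq_left Real.pi_nonneg
    have hcos1 : Real.cos (min (dist z₁.1 z₀.1) Real.pi) = 1 := by rw [hθ, Real.cos_zero]
    have hsin0 : Real.sin (min (dist z₁.1 z₀.1) Real.pi) = 0 := by rw [hθ, Real.sin_zero]
    have hc2 : ∀ u : ℝ, c2 u z₀ z₁ = 0 := by intro u; rw [c2, hsin0, mul_zero]
    have hRc1 : ∀ u : ℝ, 0 ≤ u → u ≤ 1 → Rgeo u z₀ z₁ = c1 u z₀ z₁ := by
      intro u hu hu1
      have hc1nn : 0 ≤ c1 u z₀ z₁ := by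
        rw [c1, hcos1]; nlinarith
      rw [Rgeo_eq, hc2, zero_pow (by norm_num), add_zero, Real.sqrt_sq hc1nn]
    rw [hdist, ← hD, mul_zero, cosPi, abs_zero,
      min_eq_left Real.pi_nonneg, Real.cos_zero, mul_one,
      hRc1 s hs hs1, hRc1 t ht ht1, hc2, hc2, mul_zero, add_zero]
  · rcases lt_or_ge (dist z₁.1 z₀.1) Real.pi with hDlt | hDge
    · -- 0 < D < π
      have hθ : min (dist z₁.1 z₀.1) Real.pi = dist z₁.1 z₀.1 := min_eq_left hDlt.le
      rcases eq_or_lt_of_le (Rgeo_nonneg s z₀ z₁) with hRs | hRs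
      · obtain ⟨h1, h2⟩ := c1_c2_of_Rgeo_zero hRs.symm
        rw [← hRs, h1, h2]; ring
      rcases eq_or_lt_of_le (Rgeo_nonneg t z₀ z₁) with hRt | hRt
      · obtain ⟨h1, h2⟩ := c1_c2_of_Rgeo_zero hRt.symm
        rw [← hRt, h1, h2]; ring
      -- both radii positive
      have hρ : ∀ u : ℝ, 0 < Rgeo u z₀ z₁ → rhoGeo u z₀ z₁
          = (dist z₁.1 z₀.1)⁻¹ * Real.arccos (c1 u z₀ z₁ / Rgeo u z₀ z₁) := by
        intro u hu
        rw [rhoGeo, if_pos ⟨hDpos, hDlt, hu⟩]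
        congr 2
        rw [c1, hθ]
      have habs : ∀ u : ℝ, |c1 u z₀ z₁| ≤ Rgeo u z₀ z₁ := by
        intro u
        rw [Rgeo_eq, ← Real.sqrt_sq_eq_abs]
        exact Real.sqrt_le_sqrt (le_add_of_nonneg_right (sq_nonneg _))
      have hbound : ∀ u : ℝ, 0 < Rgeo u z₀ z₁ → |c1 u z₀ z₁ / Rgeo u z₀ z₁| ≤ 1 := by
        intro u hu
        rw [abs_div, abs_of_pos hu]
        exact (div_le_one hu).2 (habs u)
      have hcosφ : ∀ u : ℝ, 0 < Rgeo u z₀ z₁ →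
          Real.cos (Real.arccos (c1 u z₀ z₁ / Rgeo u z₀ z₁)) = c1 u z₀ z₁ / Rgeo u z₀ z₁ := by
        intro u hu
        exact Real.cos_arccos (abs_le.1 (hbound u hu)).1 (abs_le.1 (hbound u hu)).2
      have hsinθ : 0 ≤ Real.sin (min (dist z₁.1 z₀.1) Real.pi) :=
        Real.sin_nonneg_of_nonneg_of_le_pi (le_min hD0 Real.pi_nonneg) (min_le_right _ _)
      have hc2nn : ∀ u : ℝ, 0 ≤ u → 0 ≤ c2 u z₀ z₁ := by
        intro u hu; exact mul_nonneg (mul_nonneg hu hr₁) hsinθ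
      have hsinφ : ∀ u : ℝ, 0 ≤ u → 0 < Rgeo u z₀ z₁ →
          Real.sin (Real.arccos (c1 u z₀ z₁ / Rgeo u z₀ z₁)) = c2 u z₀ z₁ / Rgeo u z₀ z₁ := by
        intro u hu hRu
        have h1 : 1 - (c1 u z₀ z₁ / Rgeo u z₀ z₁)^2 = (c2 u z₀ z₁ / Rgeo u z₀ z₁)^2 := by
          field_simp
          linarith [Rgeo_sq u z₀ z₁]
        rw [Real.sin_arccos, h1, Real.sqrt_sq (div_nonneg (hc2nn u hu) hRu.le)]
      set φs := Real.arccos (c1 s z₀ z₁ / Rgeo s z₀ z₁) with hφs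
      set φt := Real.arccos (c1 t z₀ z₁ / Rgeo t z₀ z₁) with hφt
      have hdist2 : dist (Xgeo t z₀ z₁) (Xgeo s z₀ z₁) = |φt - φs| := by
        rw [hdist, hρ s hRs, hρ t hRt, ← hφs, ← hφt, ← mul_sub, abs_mul,
          abs_of_pos (inv_pos.2 hDpos)]
        field_simp
      have hφsub : |φt - φs| ≤ Real.pi := by
        rw [abs_sub_le_iff]
        constructor
        · have := Real.arccos_le_pi (c1 t z₀ z₁ / Rgeo t z₀ z₁)
          have := Real.arccos_nonneg (c1 s z₀ z₁ / Rgeo s z₀ z₁)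
          rw [hφs, hφt]; linarith
        · have := Real.arccos_le_pi (c1 s z₀ z₁ / Rgeo s z₀ z₁)
          have := Real.arccos_nonneg (c1 t z₀ z₁ / Rgeo t z₀ z₁)
          rw [hφs, hφt]; linarith
      have hcosPi : cosPi (dist (Xgeo t z₀ z₁) (Xgeo s z₀ z₁))
          = Real.cos φt * Real.cos φs + Real.sin φt * Real.sin φs := by
        rw [hdist2, cosPi, abs_abs, min_eq_left hφsub, Real.cos_abs, Real.cos_sub]
      rw [hcosPi, hcosφ s hRs, hcosφ t hRt, hsinφ s hs hRs, hsinφ t ht hRt]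
      field_simp
    · -- π ≤ D
      have hθ : min (dist z₁.1 z₀.1) Real.pi = Real.pi := min_eq_right hDge
      have hc2 : ∀ u : ℝ, c2 u z₀ z₁ = 0 := by
        intro u; rw [c2, hθ, Real.sin_pi, mul_zero]
      have hc1 : ∀ u : ℝ, c1 u z₀ z₁ = (1-u) * (z₀.2 : ℝ) - u * (z₁.2 : ℝ) := by
        intro u; rw [c1, hθ, Real.cos_pi]; ring
      have hR : ∀ u : ℝ, Rgeo u z₀ z₁ = |c1 u z₀ z₁| := by
        intro u
        rw [Rgeo_eq, hc2, zero_pow (by norm_num), add_zero, Real.sqrt_sq_eq_abs]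
      have hρ : ∀ u : ℝ, rhoGeo u z₀ z₁ = (1 + Real.sign (c1 u z₀ z₁)) / 2 := by
        intro u
        rw [rhoGeo, if_neg (by rintro ⟨-, h, -⟩; exact absurd h (not_lt.2 hDge)),
          if_pos hDge, hc1 u]
      rw [hc2, hc2, mul_zero, add_zero, hR, hR, hdist, hρ, hρ]
      rcases eq_or_ne (c1 s z₀ z₁) 0 with hcs | hcs
      · rw [hcs, abs_zero, zero_mul, zero_mul, zero_mul]
      rcases eq_or_ne (c1 t z₀ z₁) 0 with hct | hct
      · rw [hct, abs_zero, mul_zero, zero_mul, mul_zero]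
      have hcos1 : cosPi 0 = 1 := by
        rw [cosPi, abs_zero, min_eq_left Real.pi_nonneg, Real.cos_zero]
      have hcosneg : cosPi (1 * dist z₁.1 z₀.1) = -1 := by
        rw [one_mul, cosPi, abs_of_nonneg hD0, hθ, Real.cos_pi]
      have hcosneg' : cosPi (dist z₁.1 z₀.1) = -1 := by
        rw [cosPi, abs_of_nonneg hD0, hθ, Real.cos_pi]
      rcases hcs.lt_or_gt with hcs | hcs <;> rcases hct.lt_or_gt with hct | hct
      · rw [Real.sign_of_neg hcs, Real.sign_of_neg hct]
        norm_num
        rw [hcos1, mul_one, abs_of_neg hcs, abs_of_neg hct]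
        ring
      · rw [Real.sign_of_neg hcs, Real.sign_of_pos hct]
        norm_num
        rw [hcosneg', abs_of_neg hcs, abs_of_pos hct]
        ring
      · rw [Real.sign_of_pos hcs, Real.sign_of_neg hct]
        norm_num
        rw [hcosneg', abs_of_pos hcs, abs_of_neg hct]
        ring
      · rw [Real.sign_of_pos hcs, Real.sign_of_pos hct]
        norm_num
        rw [hcos1, mul_one, abs_of_pos hcs, abs_of_pos hct]

end ConeAux


/-- For all `z₀, z₁` in the cone and all `0 ≤ s ≤ t ≤ 1`, the geodesic
interpolator satisfies `d_C(Z(s;z₀,z₁), Z(t;z₀,z₁)) = (t − s)·d_C(z₀,z₁)`; in particular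
`s ↦ Z(s;z₀,z₁)` is a constant-speed geodesic in the cone connecting `z₀` and `z₁`. -/
theorem coneDist_Zgeo {d : ℕ} (hd : 1 ≤ d) (Ω : Set (Euc d))
    (hΩc : IsCompact Ω) (hΩconv : Convex ℝ Ω)
    (z₀ z₁ : Euc d × ℝ≥0) (hz₀ : z₀.1 ∈ Ω) (hz₁ : z₁.1 ∈ Ω)
    (s t : ℝ) (hs : 0 ≤ s) (hst : s ≤ t) (ht : t ≤ 1) :
    coneDist (Zgeo s z₀ z₁) (Zgeo t z₀ z₁) = (t - s) * coneDist z₀ z₁ := by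
  have hnn : ∀ u : ℝ, 0 ≤ Rgeo u z₀ z₁ := fun u => ConeAux.Rgeo_nonneg u z₀ z₁
  have hk := ConeAux.key z₀ z₁ hs (hst.trans ht) (hs.trans hst) ht
  rw [coneDist]
  simp only [Zgeo]
  rw [Real.coe_toNNReal _ (hnn s), Real.coe_toNNReal _ (hnn t)]
  have hinner : Rgeo s z₀ z₁ ^ 2 + Rgeo t z₀ z₁ ^ 2
      - 2 * Rgeo s z₀ z₁ * Rgeo t z₀ z₁ * cosPi (dist (Xgeo t z₀ z₁) (Xgeo s z₀ z₁))
      = (t - s)^2 * ((z₀.2 : ℝ)^2 + (z₁.2 : ℝ)^2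
          - 2 * (z₀.2 : ℝ) * (z₁.2 : ℝ) * cosPi (dist z₁.1 z₀.1)) := by
    rw [ConeAux.Rgeo_sq, ConeAux.Rgeo_sq,
      ConeAux.cosPi_eq (dist z₁.1 z₀.1) dist_nonneg]
    simp only [ConeAux.c1, ConeAux.c2] at hk ⊢
    linear_combination (-2 : ℝ) * hk
      + ((t - s)^2 * (z₁.2 : ℝ)^2)
        * Real.sin_sq_add_cos_sq (min (dist z₁.1 z₀.1) Real.pi)
  rw [hinner, Real.sqrt_mul (sq_nonneg _), Real.sqrt_sq (sub_nonneg.2 hst), coneDist]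
end

section
/- Let d = 2 and Ω := [0,2]² ⊆ ℝ². Set μ₀ := δ_{(0,0)}, μ₁ := δ_{(π/2,0)}, and ν := ½·δ_{(π/4,0)}. Then HK(μ₀,ν) = HK(ν,μ₁) = ½·HK(μ₀,μ₁) (so ν is a metric midpoint of μ₀ and μ₁ for HK), and for every K ∈ ℝ there exist b > 0 and y ∈ (0, √3·π/4) such that, with μ* := b·δ_{(π/4,y)}, one has HK(ν,μ*)² < ½·HK(μ₀,μ*)² + ½·HK(μ₁,μ*)² − (K/4)·HK(μ₀,μ₁)². Consequently, HK on measures over a two-dimensional domain is not K-semiconcave for any K ∈ ℝ. -/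
open MeasureTheory Set
open scoped NNReal ENNReal

/-- `γ` is a plan on (the cone over) `Ω` with homogeneous marginals `(μ₀, μ₁)`:
a finite nonnegative Borel measure on `(Ω×[0,∞))²` such that
`∬ rᵢ² φ(xᵢ) dγ = ∫ φ dμᵢ` for every (bounded) continuous `φ` and `i = 0,1`. -/
def IsHKPlan {d : ℕ} (Ω : Set (Euc d)) (γ : Measure ((Euc d × ℝ≥0) × (Euc d × ℝ≥0)))
    (μ₀ μ₁ : Measure (Euc d)) : Prop :=
  IsFiniteMeasure γ ∧
  γ (((Ω ×ˢ (univ : Set ℝ≥0)) ×ˢ (Ω ×ˢ (univ : Set ℝ≥0)))ᶜ) = 0 ∧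
  (∀ φ : BoundedContinuousFunction (Euc d) ℝ,
    ∫ p, (p.1.2 : ℝ)^2 * φ p.1.1 ∂γ = ∫ x, φ x ∂μ₀) ∧
  (∀ φ : BoundedContinuousFunction (Euc d) ℝ,
    ∫ p, (p.2.2 : ℝ)^2 * φ p.2.1 ∂γ = ∫ x, φ x ∂μ₁)

/-- The squared Hellinger–Kantorovich distance:
`HK(μ₀,μ₁)² = inf { ∬ d_C(z₀,z₁)² dγ : γ a plan with homogeneous marginals (μ₀,μ₁) }`. -/
noncomputable def HK2 {d : ℕ} (Ω : Set (Euc d)) (μ₀ μ₁ : Measure (Euc d)) : ℝ :=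
  sInf { I : ℝ | ∃ γ, IsHKPlan Ω γ μ₀ μ₁ ∧ I = ∫ p, (coneDist p.1 p.2)^2 ∂γ }

/-- The Hellinger–Kantorovich distance on finite nonnegative Borel measures on `Ω`. -/
noncomputable def HK {d : ℕ} (Ω : Set (Euc d)) (μ₀ μ₁ : Measure (Euc d)) : ℝ :=
  Real.sqrt (HK2 Ω μ₀ μ₁)

/-- A point of the Euclidean plane with the given coordinates. -/
noncomputable def pt2 (a b : ℝ) : Euc 2 := (WithLp.equiv 2 (Fin 2 → ℝ)).symm ![a, b]

lemma coneDist_inner_nonneg {d : ℕ} (z₀ z₁ : Euc d × ℝ≥0) :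
    0 ≤ (z₀.2 : ℝ)^2 + (z₁.2 : ℝ)^2
      - 2 * (z₀.2 : ℝ) * (z₁.2 : ℝ) * cosPi (dist z₁.1 z₀.1) := by
  have h1 : cosPi (dist z₁.1 z₀.1) ≤ 1 := Real.cos_le_one _
  have h2 : (0:ℝ) ≤ z₀.2 := z₀.2.coe_nonneg
  have h3 : (0:ℝ) ≤ z₁.2 := z₁.2.coe_nonneg
  nlinarith [sq_nonneg ((z₀.2 : ℝ) - (z₁.2 : ℝ)), mul_nonneg h2 h3]

lemma coneDist_sq {d : ℕ} (z₀ z₁ : Euc d × ℝ≥0) :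
    (coneDist z₀ z₁)^2 = (z₀.2 : ℝ)^2 + (z₁.2 : ℝ)^2
      - 2 * (z₀.2 : ℝ) * (z₁.2 : ℝ) * cosPi (dist z₁.1 z₀.1) :=
  Real.sq_sqrt (coneDist_inner_nonneg z₀ z₁)

lemma cosPi_of_le (a : ℝ) (h0 : 0 ≤ a) (h : a ≤ Real.pi) : cosPi a = Real.cos a := by
  rw [cosPi, abs_of_nonneg h0, min_eq_left h]

noncomputable def distBCF {d : ℕ} (x : Euc d) : BoundedContinuousFunction (Euc d) ℝ :=
  BoundedContinuousFunction.mkOfBound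
    ⟨fun z => min (dist z x) 1, by fun_prop⟩ 1 (by
      intro z w
      simp only [ContinuousMap.coe_mk]
      rw [Real.dist_eq]
      have h1 : (0:ℝ) ≤ min (dist z x) 1 := le_min dist_nonneg one_pos.le
      have h2 : (0:ℝ) ≤ min (dist w x) 1 := le_min dist_nonneg one_pos.le
      have h3 : min (dist z x) 1 ≤ 1 := min_le_right _ _
      have h4 : min (dist w x) 1 ≤ 1 := min_le_right _ _
      rw [abs_le]; constructor <;> linarith)
lemma distBCF_apply {d : ℕ} (x z : Euc d) : distBCF x z = min (dist z x) 1 := rfl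

section main
variable {d : ℕ}

/-- first-marginal total mass and integrability -/
lemma marg_fst {Ω : Set (Euc d)} {x y : Euc d} {a b : ℝ} (ha : 0 < a)
    {γ : Measure ((Euc d × ℝ≥0) × (Euc d × ℝ≥0))}
    (hγ : IsHKPlan Ω γ (ENNReal.ofReal a • Measure.dirac x) (ENNReal.ofReal b • Measure.dirac y)) :
    (∫ p, ((p.1.2 : ℝ))^2 ∂γ = a) ∧ Integrable (fun p => ((p.1.2 : ℝ))^2) γ ∧
      (∀ᵐ p ∂γ, p.1.2 = 0 ∨ p.1.1 = x) := by
  obtain ⟨hfin, hsupp, hm0, hm1⟩ := hγ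
  have h1 : ∫ p, ((p.1.2 : ℝ))^2 ∂γ = a := by
    have := hm0 (BoundedContinuousFunction.const _ (1:ℝ))
    simpa [integral_smul_measure, integral_dirac, ENNReal.toReal_ofReal ha.le] using this
  have hint0 : Integrable (fun p => ((p.1.2 : ℝ))^2) γ := by
    by_contra h
    rw [integral_undef h] at h1
    linarith
  refine ⟨h1, hint0, ?_⟩
  have hz0 : ∫ p, ((p.1.2 : ℝ))^2 * min (dist p.1.1 x) 1 ∂γ = 0 := by
    have := hm0 (distBCF x)
    simpa [distBCF_apply, integral_smul_measure, integral_dirac] using this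
  have hmeas0 : AEStronglyMeasurable (fun p : (Euc d × ℝ≥0) × (Euc d × ℝ≥0) =>
      ((p.1.2 : ℝ))^2 * min (dist p.1.1 x) 1) γ := by
    apply Continuous.aestronglyMeasurable; fun_prop
  have hintm0 : Integrable (fun p : (Euc d × ℝ≥0) × (Euc d × ℝ≥0) =>
      ((p.1.2 : ℝ))^2 * min (dist p.1.1 x) 1) γ := by
    refine hint0.mono hmeas0 (Filter.Eventually.of_forall fun p => ?_)
    have h1 : (0:ℝ) ≤ min (dist p.1.1 x) 1 := le_min dist_nonneg one_pos.le
    have h3 : min (dist p.1.1 x) 1 ≤ 1 := min_le_right _ _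
    rw [Real.norm_eq_abs, Real.norm_eq_abs, abs_of_nonneg (by positivity),
      abs_of_nonneg (sq_nonneg _)]
    nlinarith [sq_nonneg ((p.1.2 : ℝ))]
  have := (integral_eq_zero_iff_of_nonneg (fun p => by
      have : (0:ℝ) ≤ min (dist p.1.1 x) 1 := le_min dist_nonneg one_pos.le
      positivity) hintm0).mp hz0
  filter_upwards [this] with p hp
  simp only [Pi.zero_apply] at hp
  rcases mul_eq_zero.mp hp with h | h
  · left; exact_mod_cast pow_eq_zero_iff (n := 2) (by norm_num) |>.mp h
  · right
    rcases min_eq_iff.mp h with ⟨h', _⟩ | ⟨h', _⟩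
    · exact dist_eq_zero.mp h'
    · norm_num at h'

/-- second-marginal version -/
lemma marg_snd {Ω : Set (Euc d)} {x y : Euc d} {a b : ℝ} (hb : 0 < b)
    {γ : Measure ((Euc d × ℝ≥0) × (Euc d × ℝ≥0))}
    (hγ : IsHKPlan Ω γ (ENNReal.ofReal a • Measure.dirac x) (ENNReal.ofReal b • Measure.dirac y)) :
    (∫ p, ((p.2.2 : ℝ))^2 ∂γ = b) ∧ Integrable (fun p => ((p.2.2 : ℝ))^2) γ ∧
      (∀ᵐ p ∂γ, p.2.2 = 0 ∨ p.2.1 = y) := by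
  obtain ⟨hfin, hsupp, hm0, hm1⟩ := hγ
  have h1 : ∫ p, ((p.2.2 : ℝ))^2 ∂γ = b := by
    have := hm1 (BoundedContinuousFunction.const _ (1:ℝ))
    simpa [integral_smul_measure, integral_dirac, ENNReal.toReal_ofReal hb.le] using this
  have hint0 : Integrable (fun p => ((p.2.2 : ℝ))^2) γ := by
    by_contra h
    rw [integral_undef h] at h1
    linarith
  refine ⟨h1, hint0, ?_⟩
  have hz0 : ∫ p, ((p.2.2 : ℝ))^2 * min (dist p.2.1 y) 1 ∂γ = 0 := by
    have := hm1 (distBCF y)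
    simpa [distBCF_apply, integral_smul_measure, integral_dirac] using this
  have hmeas0 : AEStronglyMeasurable (fun p : (Euc d × ℝ≥0) × (Euc d × ℝ≥0) =>
      ((p.2.2 : ℝ))^2 * min (dist p.2.1 y) 1) γ := by
    apply Continuous.aestronglyMeasurable; fun_prop
  have hintm0 : Integrable (fun p : (Euc d × ℝ≥0) × (Euc d × ℝ≥0) =>
      ((p.2.2 : ℝ))^2 * min (dist p.2.1 y) 1) γ := by
    refine hint0.mono hmeas0 (Filter.Eventually.of_forall fun p => ?_)
    have h1 : (0:ℝ) ≤ min (dist p.2.1 y) 1 := le_min dist_nonneg one_pos.le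
    have h3 : min (dist p.2.1 y) 1 ≤ 1 := min_le_right _ _
    rw [Real.norm_eq_abs, Real.norm_eq_abs, abs_of_nonneg (by positivity),
      abs_of_nonneg (sq_nonneg _)]
    nlinarith [sq_nonneg ((p.2.2 : ℝ))]
  have := (integral_eq_zero_iff_of_nonneg (fun p => by
      have : (0:ℝ) ≤ min (dist p.2.1 y) 1 := le_min dist_nonneg one_pos.le
      positivity) hintm0).mp hz0
  filter_upwards [this] with p hp
  simp only [Pi.zero_apply] at hp
  rcases mul_eq_zero.mp hp with h | h
  · left; exact_mod_cast pow_eq_zero_iff (n := 2) (by norm_num) |>.mp h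
  · right
    rcases min_eq_iff.mp h with ⟨h', _⟩ | ⟨h', _⟩
    · exact dist_eq_zero.mp h'
    · norm_num at h'

set_option maxHeartbeats 1000000 in
lemma HK2_dirac (Ω : Set (Euc d)) {x y : Euc d} (hx : x ∈ Ω) (hy : y ∈ Ω)
    {a b : ℝ} (ha : 0 < a) (hb : 0 < b) (hd : dist x y ≤ Real.pi / 2) :
    HK2 Ω (ENNReal.ofReal a • Measure.dirac x) (ENNReal.ofReal b • Measure.dirac y)
      = a + b - 2 * Real.sqrt (a*b) * Real.cos (dist x y) := by
  have hpi : (0:ℝ) < Real.pi := Real.pi_pos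
  have hdpi : dist x y ≤ Real.pi := by linarith
  have hc0 : 0 ≤ Real.cos (dist x y) :=
    Real.cos_nonneg_of_mem_Icc ⟨by linarith [(dist_nonneg : (0:ℝ) ≤ dist x y)], hd⟩
  set c := Real.cos (dist x y) with hcdef
  have hc1 : c ≤ 1 := Real.cos_le_one _
  set sa := Real.sqrt a with hsadef
  set sb := Real.sqrt b with hsbdef
  have hsa : 0 < sa := Real.sqrt_pos.mpr ha
  have hsb : 0 < sb := Real.sqrt_pos.mpr hb
  have hsa2 : sa^2 = a := Real.sq_sqrt ha.le
  have hsb2 : sb^2 = b := Real.sq_sqrt hb.le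
  have hab : Real.sqrt (a*b) = sa * sb := Real.sqrt_mul ha.le b
  -- the cosPi at the relevant distance
  have hcosPi : cosPi (dist y x) = c := by
    rw [dist_comm, cosPi_of_le _ dist_nonneg hdpi]
  -- the explicit optimal plan
  set z : (Euc d × ℝ≥0) × (Euc d × ℝ≥0) :=
    ((x, Real.toNNReal sa), (y, Real.toNNReal sb)) with hzdef
  have hcoe_sa : ((Real.toNNReal sa : ℝ≥0) : ℝ) = sa := Real.coe_toNNReal _ hsa.le
  have hcoe_sb : ((Real.toNNReal sb : ℝ≥0) : ℝ) = sb := Real.coe_toNNReal _ hsb.le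
  have hplan : IsHKPlan Ω (Measure.dirac z)
      (ENNReal.ofReal a • Measure.dirac x) (ENNReal.ofReal b • Measure.dirac y) := by
    refine ⟨inferInstance, ?_, ?_, ?_⟩
    · rw [Measure.dirac_apply]
      have hz : z ∈ (Ω ×ˢ (univ : Set ℝ≥0)) ×ˢ (Ω ×ˢ (univ : Set ℝ≥0)) := by
        refine ⟨⟨hx, trivial⟩, ⟨hy, trivial⟩⟩
      exact Set.indicator_of_notMem (Set.notMem_compl_iff.mpr hz) 1
    · intro φ
      rw [integral_dirac, integral_smul_measure, integral_dirac]
      simp [hzdef, hcoe_sa, hsa2, ENNReal.toReal_ofReal ha.le, smul_eq_mul]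
    · intro φ
      rw [integral_dirac, integral_smul_measure, integral_dirac]
      simp [hzdef, hcoe_sb, hsb2, ENNReal.toReal_ofReal hb.le, smul_eq_mul]
  have hcost : ∫ p, (coneDist p.1 p.2)^2 ∂(Measure.dirac z)
      = a + b - 2 * Real.sqrt (a*b) * c := by
    rw [integral_dirac]
    rw [coneDist_sq]
    simp only [hzdef, hcoe_sa, hcoe_sb]
    rw [hcosPi, hab]
    rw [hsa2, hsb2]
    ring
  set V := a + b - 2 * Real.sqrt (a*b) * c with hV
  have hmemV : V ∈ { I : ℝ | ∃ γ, IsHKPlan Ω γ (ENNReal.ofReal a • Measure.dirac x)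
      (ENNReal.ofReal b • Measure.dirac y) ∧ I = ∫ p, (coneDist p.1 p.2)^2 ∂γ } :=
    ⟨Measure.dirac z, hplan, hcost.symm⟩
  -- lower bound for all plans
  have hlb : ∀ I ∈ { I : ℝ | ∃ γ, IsHKPlan Ω γ (ENNReal.ofReal a • Measure.dirac x)
      (ENNReal.ofReal b • Measure.dirac y) ∧ I = ∫ p, (coneDist p.1 p.2)^2 ∂γ }, V ≤ I := by
    rintro I ⟨γ, hγ, rfl⟩
    obtain ⟨h1, hint0, hconc0⟩ := marg_fst ha hγ
    obtain ⟨h2, hint1, hconc1⟩ := marg_snd hb hγ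
    -- integrability of the cone cost
    have hconemeas : AEStronglyMeasurable
        (fun p : (Euc d × ℝ≥0) × (Euc d × ℝ≥0) => (coneDist p.1 p.2)^2) γ := by
      apply Continuous.aestronglyMeasurable
      unfold coneDist cosPi
      fun_prop
    have hintcone : Integrable (fun p : (Euc d × ℝ≥0) × (Euc d × ℝ≥0) =>
        (coneDist p.1 p.2)^2) γ := by
      refine ((hint0.add hint1).const_mul 2).mono hconemeas
        (Filter.Eventually.of_forall fun p => ?_)
      rw [Real.norm_eq_abs, Real.norm_eq_abs, abs_of_nonneg (sq_nonneg _), coneDist_sq]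
      have hcm1 : -1 ≤ cosPi (dist p.2.1 p.1.1) := Real.neg_one_le_cos _
      have h2 : (0:ℝ) ≤ p.1.2 := p.1.2.coe_nonneg
      have h3 : (0:ℝ) ≤ p.2.2 := p.2.2.coe_nonneg
      have : ((p.1.2:ℝ))^2 + ((p.2.2:ℝ))^2
          - 2 * (p.1.2:ℝ) * (p.2.2:ℝ) * cosPi (dist p.2.1 p.1.1)
          ≤ 2 * (((p.1.2:ℝ))^2 + ((p.2.2:ℝ))^2) := by
        nlinarith [sq_nonneg ((p.1.2:ℝ) - (p.2.2:ℝ)),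
          mul_nonneg (mul_nonneg h2 h3)
            (by linarith : (0:ℝ) ≤ 1 + cosPi (dist p.2.1 p.1.1))]
      calc _ ≤ 2 * (((p.1.2:ℝ))^2 + ((p.2.2:ℝ))^2) := this
        _ ≤ |2 * (((p.1.2:ℝ))^2 + ((p.2.2:ℝ))^2)| := le_abs_self _
    -- the a.e. pointwise bound
    have hkey : ∀ᵐ p ∂γ,
        (sa*sb - c*b) * ((p.1.2:ℝ))^2 + (sa*sb - c*a) * ((p.2.2:ℝ))^2
          ≤ sa * sb * (coneDist p.1 p.2)^2 := by
      filter_upwards [hconc0, hconc1] with p h0 h1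
      rw [coneDist_sq]
      have h2 : (0:ℝ) ≤ p.1.2 := p.1.2.coe_nonneg
      have h3 : (0:ℝ) ≤ p.2.2 := p.2.2.coe_nonneg
      have hb2 : 2 * sa * sb * ((p.1.2:ℝ) * (p.2.2:ℝ) * cosPi (dist p.2.1 p.1.1))
          ≤ c * (b * ((p.1.2:ℝ))^2 + a * ((p.2.2:ℝ))^2) := by
        rcases h0 with h0 | h0
        · have : (p.1.2 : ℝ) = 0 := by exact_mod_cast congrArg NNReal.toReal h0
          rw [this]
          have : (0:ℝ) ≤ c * (b * 0^2 + a * ((p.2.2:ℝ))^2) := by positivity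
          simpa using this
        rcases h1 with h1 | h1
        · have : (p.2.2 : ℝ) = 0 := by exact_mod_cast congrArg NNReal.toReal h1
          rw [this]
          have : (0:ℝ) ≤ c * (b * ((p.1.2:ℝ))^2 + a * 0^2) := by positivity
          simpa using this
        · rw [h0, h1, hcosPi, ← hsa2, ← hsb2]
          nlinarith [mul_nonneg hc0 (sq_nonneg (sb * (p.1.2:ℝ) - sa * (p.2.2:ℝ)))]
      nlinarith [hb2]
    have hintlhs : Integrable (fun p : (Euc d × ℝ≥0) × (Euc d × ℝ≥0) =>
        (sa*sb - c*b) * ((p.1.2:ℝ))^2 + (sa*sb - c*a) * ((p.2.2:ℝ))^2) γ :=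
      (hint0.const_mul _).add (hint1.const_mul _)
    have hmono := integral_mono_ae hintlhs (hintcone.const_mul (sa*sb)) hkey
    rw [integral_add (hint0.const_mul _) (hint1.const_mul _),
      integral_const_mul, integral_const_mul, integral_const_mul, h1, h2] at hmono
    -- now divide by sa*sb > 0
    have hpos : 0 < sa * sb := mul_pos hsa hsb
    have heq : sa*sb*(a + b - 2*(sa*sb)*c)
        = (sa*sb - c*b)*a + (sa*sb - c*a)*b := by
      rw [← hsa2, ← hsb2]; ring
    have hfin := le_of_mul_le_mul_left (heq ▸ hmono) hpos
    rw [hV, hab]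
    linarith
  -- conclude
  have hne : { I : ℝ | ∃ γ, IsHKPlan Ω γ (ENNReal.ofReal a • Measure.dirac x)
      (ENNReal.ofReal b • Measure.dirac y) ∧ I = ∫ p, (coneDist p.1 p.2)^2 ∂γ }.Nonempty :=
    ⟨V, hmemV⟩
  unfold HK2
  exact le_antisymm (csInf_le ⟨V, hlb⟩ hmemV) (le_csInf hne hlb)

end main


lemma pt2_apply0 (a b : ℝ) : pt2 a b 0 = a := by
  simp [pt2, WithLp.equiv_symm_apply]

lemma pt2_apply1 (a b : ℝ) : pt2 a b 1 = b := by
  simp [pt2, WithLp.equiv_symm_apply]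

lemma dist_pt2 (a b a' b' : ℝ) :
    dist (pt2 a b) (pt2 a' b') = Real.sqrt ((a - a')^2 + (b - b')^2) := by
  rw [EuclideanSpace.dist_eq, Fin.sum_univ_two]
  rw [pt2_apply0, pt2_apply1, pt2_apply0, pt2_apply1]
  rw [Real.dist_eq, Real.dist_eq, sq_abs, sq_abs]


set_option maxHeartbeats 1000000 in
/-- On `Ω = [0,2]² ⊆ ℝ²`, with `μ₀ = δ_{(0,0)}`, `μ₁ = δ_{(π/2,0)}`,
and `ν = ½δ_{(π/4,0)}`: `ν` is a metric midpoint of `μ₀` and `μ₁` for `HK`, and for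
every `K ∈ ℝ` there are `b > 0` and `y ∈ (0, √3·π/4)` such that with
`μ* = bδ_{(π/4,y)}` one has
`HK(ν,μ*)² < ½HK(μ₀,μ*)² + ½HK(μ₁,μ*)² − (K/4)HK(μ₀,μ₁)²`.
Hence `HK` in dimension two is not `K`-semiconcave for any `K`. -/
theorem HK_not_semiconcave
    (Ω : Set (Euc 2)) (hΩ : Ω = {x : Euc 2 | x 0 ∈ Icc (0:ℝ) 2 ∧ x 1 ∈ Icc (0:ℝ) 2})
    (μ₀ μ₁ ν : Measure (Euc 2))
    (hμ₀ : μ₀ = Measure.dirac (pt2 0 0))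
    (hμ₁ : μ₁ = Measure.dirac (pt2 (Real.pi / 2) 0))
    (hν : ν = (1/2 : ℝ≥0∞) • Measure.dirac (pt2 (Real.pi / 4) 0)) :
    HK Ω μ₀ ν = HK Ω ν μ₁ ∧
    HK Ω μ₀ ν = (1/2) * HK Ω μ₀ μ₁ ∧
    ∀ K : ℝ, ∃ b : ℝ, 0 < b ∧ ∃ y : ℝ, y ∈ Ioo 0 (Real.sqrt 3 * Real.pi / 4) ∧
      (HK Ω ν (ENNReal.ofReal b • Measure.dirac (pt2 (Real.pi / 4) y)))^2
        < (1/2) * (HK Ω μ₀ (ENNReal.ofReal b • Measure.dirac (pt2 (Real.pi / 4) y)))^2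
          + (1/2) * (HK Ω μ₁ (ENNReal.ofReal b • Measure.dirac (pt2 (Real.pi / 4) y)))^2
          - (K/4) * (HK Ω μ₀ μ₁)^2 := by
  have hpi : (0:ℝ) < Real.pi := Real.pi_pos
  have hpi4 : Real.pi ≤ 4 := Real.pi_le_four
  -- membership of the four points in Ω
  have hmem : ∀ a b : ℝ, 0 ≤ a → a ≤ 2 → 0 ≤ b → b ≤ 2 → pt2 a b ∈ Ω := by
    intro a b h1 h2 h3 h4
    rw [hΩ]
    exact ⟨by rw [pt2_apply0]; exact ⟨h1, h2⟩, by rw [pt2_apply1]; exact ⟨h3, h4⟩⟩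
  have hp0 : pt2 0 0 ∈ Ω := hmem _ _ le_rfl (by norm_num) le_rfl (by norm_num)
  have hpA : pt2 (Real.pi/4) 0 ∈ Ω := hmem _ _ (by positivity) (by linarith) le_rfl (by norm_num)
  have hpB : pt2 (Real.pi/2) 0 ∈ Ω := hmem _ _ (by positivity) (by linarith) le_rfl (by norm_num)
  have hpS : pt2 (Real.pi/4) (Real.pi/4) ∈ Ω :=
    hmem _ _ (by positivity) (by linarith) (by positivity) (by linarith)
  -- distances
  have d0A : dist (pt2 0 0) (pt2 (Real.pi/4) 0) = Real.pi/4 := by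
    rw [dist_pt2, show ((0:ℝ) - Real.pi/4)^2 + ((0:ℝ)-0)^2 = (Real.pi/4)^2 by ring,
      Real.sqrt_sq (by positivity)]
  have dAB : dist (pt2 (Real.pi/4) 0) (pt2 (Real.pi/2) 0) = Real.pi/4 := by
    rw [dist_pt2, show (Real.pi/4 - Real.pi/2)^2 + ((0:ℝ)-0)^2 = (Real.pi/4)^2 by ring,
      Real.sqrt_sq (by positivity)]
  have d0B : dist (pt2 0 0) (pt2 (Real.pi/2) 0) = Real.pi/2 := by
    rw [dist_pt2, show ((0:ℝ) - Real.pi/2)^2 + ((0:ℝ)-0)^2 = (Real.pi/2)^2 by ring,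
      Real.sqrt_sq (by positivity)]
  have dAS : dist (pt2 (Real.pi/4) 0) (pt2 (Real.pi/4) (Real.pi/4)) = Real.pi/4 := by
    rw [dist_pt2, show (Real.pi/4 - Real.pi/4)^2 + ((0:ℝ) - Real.pi/4)^2 = (Real.pi/4)^2 by ring,
      Real.sqrt_sq (by positivity)]
  set D : ℝ := Real.sqrt (Real.pi^2/8) with hD
  have d0S : dist (pt2 0 0) (pt2 (Real.pi/4) (Real.pi/4)) = D := by
    rw [dist_pt2, show ((0:ℝ) - Real.pi/4)^2 + ((0:ℝ) - Real.pi/4)^2 = Real.pi^2/8 by ring]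
  have dBS : dist (pt2 (Real.pi/2) 0) (pt2 (Real.pi/4) (Real.pi/4)) = D := by
    rw [dist_pt2, show (Real.pi/2 - Real.pi/4)^2 + ((0:ℝ) - Real.pi/4)^2 = Real.pi^2/8 by ring]
  have hD0 : 0 ≤ D := Real.sqrt_nonneg _
  have hDle : D ≤ Real.pi/2 := by
    rw [hD, show Real.pi/2 = Real.sqrt ((Real.pi/2)^2) from (Real.sqrt_sq (by positivity)).symm]
    exact Real.sqrt_le_sqrt (by nlinarith)
  have hDgt : Real.pi/3 < D := by
    rw [hD, show Real.pi/3 = Real.sqrt ((Real.pi/3)^2) from (Real.sqrt_sq (by positivity)).symm]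
    exact Real.sqrt_lt_sqrt (by positivity) (by nlinarith)
  set c : ℝ := Real.cos D with hc
  have hcD : c < 1/2 := by
    have := Real.cos_lt_cos_of_nonneg_of_le_pi (by positivity) (by linarith) hDgt
    rwa [Real.cos_pi_div_three] at this
  have hcD0 : 0 ≤ c := Real.cos_nonneg_of_mem_Icc ⟨by linarith, hDle⟩
  -- measures in normal form
  have hμ₀' : μ₀ = ENNReal.ofReal 1 • Measure.dirac (pt2 0 0) := by
    rw [hμ₀, ENNReal.ofReal_one, one_smul]
  have hhalf : (1/2 : ℝ≥0∞) = ENNReal.ofReal (1/2) := by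
    rw [ENNReal.ofReal_div_of_pos (by norm_num), ENNReal.ofReal_one, ENNReal.ofReal_ofNat]
  have hν' : ν = ENNReal.ofReal (1/2) • Measure.dirac (pt2 (Real.pi/4) 0) := by
    rw [hν, hhalf]
  -- basic HK2 values
  have hK01 : HK2 Ω μ₀ μ₁ = 2 := by
    rw [hμ₀', hμ₁, show Measure.dirac (pt2 (Real.pi/2) 0)
        = ENNReal.ofReal 1 • Measure.dirac (pt2 (Real.pi/2) 0) by
      rw [ENNReal.ofReal_one, one_smul]]
    rw [HK2_dirac Ω hp0 hpB one_pos one_pos (by rw [d0B])]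
    rw [d0B, Real.cos_pi_div_two]
    norm_num
  have hK0ν : HK2 Ω μ₀ ν = 1/2 := by
    rw [hμ₀', hν', HK2_dirac Ω hp0 hpA one_pos (by norm_num) (by rw [d0A]; linarith)]
    rw [d0A, Real.cos_pi_div_four]
    have h : Real.sqrt (1 * (1/2)) * Real.sqrt 2 = 1 := by
      rw [← Real.sqrt_mul (by norm_num)]; norm_num
    nlinarith [h]
  have hKν1 : HK2 Ω ν μ₁ = 1/2 := by
    rw [hμ₁, hν', show Measure.dirac (pt2 (Real.pi/2) 0)
        = ENNReal.ofReal 1 • Measure.dirac (pt2 (Real.pi/2) 0) by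
      rw [ENNReal.ofReal_one, one_smul]]
    rw [HK2_dirac Ω hpA hpB (by norm_num) one_pos (by rw [dAB]; linarith)]
    rw [dAB, Real.cos_pi_div_four]
    have h : Real.sqrt ((1/2) * 1) * Real.sqrt 2 = 1 := by
      rw [← Real.sqrt_mul (by norm_num)]; norm_num
    nlinarith [h]
  refine ⟨?_, ?_, ?_⟩
  · rw [HK, HK, hK0ν, hKν1]
  · rw [HK, HK, hK0ν, hK01]
    have h2 : Real.sqrt 2 * Real.sqrt 2 = 2 := Real.mul_self_sqrt (by norm_num)
    have hne : Real.sqrt 2 ≠ 0 := by positivity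
    rw [show (1/2:ℝ) = 2⁻¹ by norm_num, Real.sqrt_inv]
    field_simp
    rw [sq, h2]
  · intro K
    have hε : 0 < 1 - 2*c := by linarith
    set s : ℝ := (|K| + 1)/(1 - 2*c) with hs
    have hs0 : 0 < s := div_pos (by positivity) hε
    refine ⟨s^2, by positivity, Real.pi/4, ⟨by positivity, ?_⟩, ?_⟩
    · have h3 : (1:ℝ) < Real.sqrt 3 := by
        rw [show (1:ℝ) = Real.sqrt 1 from (Real.sqrt_one).symm]
        exact Real.sqrt_lt_sqrt (by norm_num) (by norm_num)
      nlinarith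
    · have hsb : Real.sqrt (s^2) = s := Real.sqrt_sq hs0.le
      have hνS : HK2 Ω ν (ENNReal.ofReal (s^2) • Measure.dirac (pt2 (Real.pi/4) (Real.pi/4)))
          = 1/2 + s^2 - s := by
        rw [hν', HK2_dirac Ω hpA hpS (by norm_num) (pow_pos hs0 2) (by rw [dAS]; linarith)]
        rw [dAS, Real.cos_pi_div_four]
        have h : Real.sqrt ((1/2) * s^2) * Real.sqrt 2 = s := by
          rw [← Real.sqrt_mul (by positivity), show (1/2) * s^2 * 2 = s^2 by ring, hsb]
        linear_combination -h
      have h0S : HK2 Ω μ₀ (ENNReal.ofReal (s^2) • Measure.dirac (pt2 (Real.pi/4) (Real.pi/4)))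
          = 1 + s^2 - 2*s*c := by
        rw [hμ₀', HK2_dirac Ω hp0 hpS one_pos (pow_pos hs0 2) (by rw [d0S]; exact hDle)]
        rw [d0S, one_mul, hsb, ← hc]
      have hBS : HK2 Ω μ₁ (ENNReal.ofReal (s^2) • Measure.dirac (pt2 (Real.pi/4) (Real.pi/4)))
          = 1 + s^2 - 2*s*c := by
        rw [hμ₁, show Measure.dirac (pt2 (Real.pi/2) 0)
            = ENNReal.ofReal 1 • Measure.dirac (pt2 (Real.pi/2) 0) by
          rw [ENNReal.ofReal_one, one_smul]]
        rw [HK2_dirac Ω hpB hpS one_pos (pow_pos hs0 2) (by rw [dBS]; exact hDle)]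
        rw [dBS, one_mul, hsb, ← hc]
      rw [HK, HK, HK, HK, hνS, h0S, hBS, hK01]
      rw [Real.sq_sqrt (by nlinarith [sq_nonneg (s - 1/2)]),
        Real.sq_sqrt (by nlinarith [sq_nonneg (s - 1/2), mul_nonneg hs0.le hcD0]),
        Real.sq_sqrt (by norm_num : (0:ℝ) ≤ 2)]
      have hse : s * (1 - 2*c) = |K| + 1 := by
        rw [hs]; exact div_mul_cancel₀ _ hε.ne'
      have hK : K ≤ |K| := le_abs_self K
      have hK0 : 0 ≤ |K| := abs_nonneg K
      nlinarith [hse]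
end
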